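/- For every integer M ≥ 0, the sum over n from 0 to M of ((1/2)_n)^2 / ((1)_n^2 (n+1)) equals 4(M+1)((1/2)_{M+1})^2 / ((1)_{M+1})^2. -/

import Mathlib

open Polynomial Finset

/-- Rising Pochhammer symbol over ℚ. -/
noncomputable def poch (x : ℚ) (n : ℕ) : ℚ := (ascPochhammer ℚ n).eval x

lemma poch_zero (x : ℚ) : poch x 0 = 1 := by simp [poch]

lemma poch_succ (x : ℚ) (n : ℕ) : poch x (n+1) = poch x n * (x + n) := by
  simp [poch, ascPochhammer_succ_right]

lemma poch_pos (x : ℚ) (hx : 0 < x) (n : ℕ) : 0 < poch x n := by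
  induction n with
  | zero => simp [poch_zero]
  | succ n ih => rw [poch_succ]; positivity

theorem vanHamme_I2_closed_form (M : ℕ) :
    ∑ n ∈ Finset.range (M + 1), (poch (1/2) n)^2 / ((poch 1 n)^2 * (n + 1)) =
      4 * (M + 1) * (poch (1/2) (M+1))^2 / (poch 1 (M+1))^2 := by
  induction M with
  | zero => norm_num [poch_zero, poch_succ]
  | succ M ih =>
      rw [Finset.sum_range_succ, ih]
      have h2 := poch_pos (1/2) (by norm_num) (M+1)
      have h1 := poch_pos 1 (by norm_num) (M+1)
      rw [poch_succ (1/2) (M+1), poch_succ 1 (M+1)]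
      have hn1 : ((M:ℚ) + 1) ≠ 0 := by positivity
      have hn2 : ((M:ℚ) + 1 + 1) ≠ 0 := by positivity
      field_simp
      push_cast
      ring
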